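/- arXiv:1302.6390 — 4 statements merged into one kernel-verified Lean document; each statement's English description precedes it below -/
import Mathlib

section
/- Let v ∈ ℝᵖ, A ⊆ {1,…,p} with |A| = s, and let K be a p×p positive semi-definite matrix satisfying zᵀKz ≥ ψ Σ_{j∈A} z_j² for all z in the cone {z : Σ_{j∉A}|z_j| ≤ c Σ_{j∈A}|z_j|} (ψ > 0, c ≥ 0). If v lies in this cone and vᵀKv + (λ/2)‖v‖₁ ≤ 2λ m √s · (Σ_{j∈A} v_j²)^{1/2} for constants λ > 0 and m > 0, then vᵀKv ≤ 4 ψ^{-1} λ² m² s and ‖v‖₁ ≤ 8 ψ^{-1} λ m² s. -/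
theorem stmt_9 {p : ℕ} (K : Matrix (Fin p) (Fin p) ℝ) (hK : K.PosSemidef)
    (A : Finset (Fin p)) (s : ℕ) (hs : A.card = s)
    (ψ c lam m : ℝ) (hψ : 0 < ψ) (hc : 0 ≤ c) (hlam : 0 < lam) (hm : 0 < m)
    (hRE : ∀ z : Fin p → ℝ,
      (∑ j ∈ Finset.univ \ A, |z j| ≤ c * ∑ j ∈ A, |z j|) →
        ψ * ∑ j ∈ A, (z j) ^ 2 ≤ ∑ j, z j * K.mulVec z j)
    (v : Fin p → ℝ)
    (hv : ∑ j ∈ Finset.univ \ A, |v j| ≤ c * ∑ j ∈ A, |v j|)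
    (hineq : (∑ j, v j * K.mulVec v j) + lam / 2 * ∑ j, |v j| ≤
        2 * lam * m * Real.sqrt s * Real.sqrt (∑ j ∈ A, (v j) ^ 2)) :
    (∑ j, v j * K.mulVec v j) ≤ 4 * ψ⁻¹ * lam ^ 2 * m ^ 2 * s ∧
      (∑ j, |v j|) ≤ 8 * ψ⁻¹ * lam * m ^ 2 * s := by
  set Q : ℝ := ∑ j, v j * K.mulVec v j with hQdef
  set L : ℝ := ∑ j, |v j| with hLdef
  set S : ℝ := ∑ j ∈ A, (v j) ^ 2 with hSdef
  have hQ0 : 0 ≤ Q := by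
    have := hK.dotProduct_mulVec_nonneg v
    simpa [dotProduct, hQdef] using this
  have hL0 : 0 ≤ L := Finset.sum_nonneg fun j _ => abs_nonneg _
  have hS0 : 0 ≤ S := Finset.sum_nonneg fun j _ => sq_nonneg _
  have hψS : ψ * S ≤ Q := hRE v hv
  set r : ℝ := Real.sqrt Q with hrdef
  set t : ℝ := Real.sqrt S with htdef
  set u : ℝ := Real.sqrt ψ with hudef
  set w : ℝ := Real.sqrt s with hwdef
  have hr0 : 0 ≤ r := Real.sqrt_nonneg _
  have ht0 : 0 ≤ t := Real.sqrt_nonneg _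
  have hu0 : 0 < u := Real.sqrt_pos.mpr hψ
  have hw0 : 0 ≤ w := Real.sqrt_nonneg _
  have hr2 : r ^ 2 = Q := Real.sq_sqrt hQ0
  have ht2 : t ^ 2 = S := Real.sq_sqrt hS0
  have hu2 : u ^ 2 = ψ := Real.sq_sqrt hψ.le
  have hw2 : w ^ 2 = (s : ℝ) := Real.sq_sqrt (Nat.cast_nonneg s)
  -- u * t ≤ r
  have hut : u * t ≤ r := by
    have : Real.sqrt (ψ * S) ≤ Real.sqrt Q := Real.sqrt_le_sqrt hψS
    rwa [Real.sqrt_mul hψ.le] at this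
  -- key: u * r ≤ 2 * lam * m * w
  have hkey : u * r ≤ 2 * lam * m * w := by
    have h1 : Q ≤ 2 * lam * m * w * t := by nlinarith
    have h2 : u * Q ≤ 2 * lam * m * w * r := by
      calc u * Q ≤ u * (2 * lam * m * w * t) := mul_le_mul_of_nonneg_left h1 hu0.le
        _ = (2 * lam * m * w) * (u * t) := by ring
        _ ≤ (2 * lam * m * w) * r := mul_le_mul_of_nonneg_left hut (by positivity)
        _ = 2 * lam * m * w * r := by ring
    rcases eq_or_lt_of_le hr0 with h | h
    · rw [← h, mul_zero]; positivity
    · have : u * r * r ≤ 2 * lam * m * w * r := by nlinarith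
      exact le_of_mul_le_mul_right (by linarith) h
  clear_value Q L S r t u w
  have hψQ : ψ * Q ≤ 4 * lam ^ 2 * m ^ 2 * s := by
    have h3 := mul_le_mul hkey hkey (by positivity) (by positivity)
    have e1 : ψ * Q = (u * r) * (u * r) := by rw [← hu2, ← hr2]; ring
    have e2 : 4 * lam ^ 2 * m ^ 2 * (s : ℝ) = 2 * lam * m * w * (2 * lam * m * w) := by
      rw [← hw2]; ring
    linarith
  constructor
  · have h3 : Q ≤ ψ⁻¹ * (4 * lam ^ 2 * m ^ 2 * s) := (le_inv_mul_iff₀ hψ).mpr hψQ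
    linarith
  · -- lam/2 * L ≤ 2*lam*m*w*t, u*t ≤ r, u*r ≤ 2λmw ⇒ ψ*(lam/2)*L ≤ (2λmw)²
    have h1 : lam / 2 * L ≤ 2 * lam * m * w * t := by nlinarith
    have hB0 : 0 ≤ 2 * lam * m * w := mul_nonneg (by positivity) hw0
    have h2 : ψ * (lam / 2 * L) ≤ 4 * lam ^ 2 * m ^ 2 * s := by
      have hu2t : u * (u * t) ≤ u * r := mul_le_mul_of_nonneg_left hut hu0.le
      have huut : u * (u * t) ≤ 2 * lam * m * w := le_trans hu2t hkey
      calc ψ * (lam / 2 * L) = (u * u) * (lam / 2 * L) := by rw [← hu2]; ring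
        _ ≤ (u * u) * (2 * lam * m * w * t) := by
            exact mul_le_mul_of_nonneg_left h1 (mul_nonneg hu0.le hu0.le)
        _ = (2 * lam * m * w) * (u * (u * t)) := by ring
        _ ≤ (2 * lam * m * w) * (2 * lam * m * w) := mul_le_mul_of_nonneg_left huut hB0
        _ = 4 * lam ^ 2 * m ^ 2 * w ^ 2 := by ring
        _ = 4 * lam ^ 2 * m ^ 2 * s := by rw [hw2]
    have h2' : (lam / 2) * (ψ * L) ≤ (lam / 2) * (8 * lam * m ^ 2 * s) := by linarith
    have h5 : ψ * L ≤ 8 * lam * m ^ 2 * s :=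
      le_of_mul_le_mul_left h2' (by positivity)
    have h4 : L ≤ ψ⁻¹ * (8 * lam * m ^ 2 * s) := (le_inv_mul_iff₀ hψ).mpr h5
    linarith
end

section
/- Suppose β̂ satisfies the stationarity equations −2 x_iᵀ(y − Xβ̂) + λ₁* ŵ_i sign(β̂_i) + 2λ₂ Σ_k q_{ik} β̂_k = 0 for indices i and j with β̂_i β̂_j > 0 (hence sign(β̂_i) = sign(β̂_j)). Then λ₂ |Σ_k (q_{ik} − q_{jk}) β̂_k| ≤ ‖x_i − x_j‖₂ ‖y − Xβ̂‖₂ + (λ₁*/2)|ŵ_i − ŵ_j|. -/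
lemma cs_abs {n : ℕ} (a b : Fin n → ℝ) :
    |∑ l, a l * b l| ≤ Real.sqrt (∑ l, a l ^ 2) * Real.sqrt (∑ l, b l ^ 2) := by
  have h2 : (∑ l, a l * b l)^2 ≤ (∑ l, a l ^ 2) * (∑ l, b l ^ 2) := by
    have := Finset.sum_mul_sq_le_sq_mul_sq Finset.univ a b
    simpa [pow_two] using this
  have := Real.sqrt_le_sqrt h2
  rw [Real.sqrt_mul (by positivity)] at this
  calc |∑ l, a l * b l| = Real.sqrt ((∑ l, a l * b l)^2) := (Real.sqrt_sq_eq_abs _).symm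
    _ ≤ _ := this

theorem stmt_15 {n p : ℕ} (X : Matrix (Fin n) (Fin p) ℝ) (y : Fin n → ℝ)
    (Q : Matrix (Fin p) (Fin p) ℝ) (hQsym : Q.transpose = Q)
    (l1 l2 : ℝ) (hl1 : 0 < l1) (hl2 : 0 < l2)
    (w : Fin p → ℝ) (hw : ∀ k, 0 ≤ w k)
    (βh : Fin p → ℝ) (i j : Fin p) (hij : 0 < βh i * βh j)
    (hstati : -2 * (∑ l, X l i * (y l - X.mulVec βh l)) +
        l1 * w i * Real.sign (βh i) + 2 * l2 * ∑ k, Q i k * βh k = 0)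
    (hstatj : -2 * (∑ l, X l j * (y l - X.mulVec βh l)) +
        l1 * w j * Real.sign (βh j) + 2 * l2 * ∑ k, Q j k * βh k = 0) :
    l2 * |∑ k, (Q i k - Q j k) * βh k| ≤
      Real.sqrt (∑ l, (X l i - X l j) ^ 2) *
          Real.sqrt (∑ l, (y l - X.mulVec βh l) ^ 2) +
        l1 / 2 * |w i - w j| := by
  have hsign : Real.sign (βh i) = Real.sign (βh j) := by
    rcases lt_or_gt_of_ne (fun h : βh i = 0 => by simp [h] at hij) with hi | hi
    · have hj : βh j < 0 := by nlinarith
      rw [Real.sign_of_neg hi, Real.sign_of_neg hj]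
    · have hj : 0 < βh j := by nlinarith
      rw [Real.sign_of_pos hi, Real.sign_of_pos hj]
  have habs : |Real.sign (βh i)| ≤ 1 := by
    rcases Real.sign_apply_eq (βh i) with h | h | h <;> simp [h]
  -- subtract stationarity equations
  have key : l2 * (∑ k, (Q i k - Q j k) * βh k) =
      (∑ l, (X l i - X l j) * (y l - X.mulVec βh l)) - l1 / 2 * (w i - w j) * Real.sign (βh i) := by
    have e1 : ∑ k, (Q i k - Q j k) * βh k =
        (∑ k, Q i k * βh k) - (∑ k, Q j k * βh k) := by
      rw [← Finset.sum_sub_distrib]; exact Finset.sum_congr rfl fun k _ => by ring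
    have e2 : ∑ l, (X l i - X l j) * (y l - X.mulVec βh l) =
        (∑ l, X l i * (y l - X.mulVec βh l)) - (∑ l, X l j * (y l - X.mulVec βh l)) := by
      rw [← Finset.sum_sub_distrib]; exact Finset.sum_congr rfl fun l _ => by ring
    rw [e1, e2, hsign]
    rw [hsign] at hstati
    linarith [hstati, hstatj]
  have hcs := cs_abs (fun l => X l i - X l j) (fun l => y l - X.mulVec βh l)
  calc l2 * |∑ k, (Q i k - Q j k) * βh k|
      = |l2 * (∑ k, (Q i k - Q j k) * βh k)| := by
        rw [abs_mul, abs_of_pos hl2]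
    _ = |(∑ l, (X l i - X l j) * (y l - X.mulVec βh l)) - l1 / 2 * (w i - w j) * Real.sign (βh i)| := by
        rw [key]
    _ ≤ |∑ l, (X l i - X l j) * (y l - X.mulVec βh l)| + |l1 / 2 * (w i - w j) * Real.sign (βh i)| :=
        abs_sub _ _
    _ ≤ Real.sqrt (∑ l, (X l i - X l j) ^ 2) * Real.sqrt (∑ l, (y l - X.mulVec βh l) ^ 2) +
        l1 / 2 * |w i - w j| := by
        refine add_le_add hcs ?_
        rw [abs_mul, abs_mul, abs_of_pos (by linarith : (0:ℝ) < l1/2)]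
        nlinarith [abs_nonneg (w i - w j), mul_nonneg (le_of_lt (by linarith : (0:ℝ) < l1/2)) (abs_nonneg (w i - w j))]
end

section
/- Grouping effect for AdaCnet: with standardized predictors of equal pairwise correlation ρ (ρ² ≠ 1), if β̂ minimizes ‖y − Xβ‖₂² + λ₂ βᵀQβ + λ₁* Σ_j ŵ_j|β_j| with Q the correlation penalty matrix and ŵ_j = |β̂_j⁰|^{−γ}, and β̂_i β̂_j > 0, then (1/‖y‖₂)|β̂_j − β̂_i| ≤ ((1−ρ²)/(2(p+ρ−1)λ₂)) [√(2(1−ρ)) + (γλ₁*/(‖y‖₂ min(|β̂_i⁰|,|β̂_j⁰|)^{γ+1})) |β̂_i⁰ − β̂_j⁰| ]. -/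
lemma quadB_eq_zero (A B δ : ℝ) (hδ : 0 < δ)
    (h : ∀ t : ℝ, |t| ≤ δ → 0 ≤ A * t ^ 2 + B * t) : B = 0 := by
  have key : ∀ t : ℝ, 0 < t → t ≤ δ → |B| ≤ A * t := by
    intro t ht htδ
    have h1 := h t (by rw [abs_of_pos ht]; exact htδ)
    have h2 := h (-t) (by rw [abs_neg, abs_of_pos ht]; exact htδ)
    have hBt : |B| * t ≤ A * t ^ 2 := by
      rcases abs_cases B with ⟨hB, _⟩ | ⟨hB, _⟩ <;> nlinarith
    nlinarith
  by_contra hB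
  have hBpos : 0 < |B| := abs_pos.mpr hB
  rcases le_or_gt A 0 with hA | hA
  · have := key δ hδ le_rfl
    nlinarith
  · have ht : 0 < min δ (|B| / (2 * A)) := lt_min hδ (by positivity)
    have h1 := key _ ht (min_le_left _ _)
    have h2 : A * min δ (|B| / (2 * A)) ≤ A * (|B| / (2 * A)) :=
      mul_le_mul_of_nonneg_left (min_le_right _ _) hA.le
    have h3 : A * (|B| / (2 * A)) = |B| / 2 := by field_simp
    linarith

lemma rpow_neg_sub_le (γ a b : ℝ) (hγ : 0 < γ) (ha : 0 < a) (hab : a ≤ b) :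
    a ^ (-γ) - b ^ (-γ) ≤ γ * a ^ (-(γ + 1)) * (b - a) := by
  have hderiv : ∀ x ∈ Set.Icc a b, HasDerivWithinAt (fun x : ℝ => x ^ (-γ))
      (-γ * x ^ (-γ - 1)) (Set.Icc a b) x := by
    intro x hx
    exact (Real.hasDerivAt_rpow_const (Or.inl (ne_of_gt (lt_of_lt_of_le ha hx.1)))).hasDerivWithinAt
  have hbound : ∀ x ∈ Set.Icc a b, ‖-γ * x ^ (-γ - 1)‖ ≤ γ * a ^ (-(γ + 1)) := by
    intro x hx
    have hxpos : 0 < x := lt_of_lt_of_le ha hx.1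
    rw [norm_mul, Real.norm_eq_abs, Real.norm_eq_abs, abs_neg, abs_of_pos hγ,
      abs_of_pos (Real.rpow_pos_of_pos hxpos _)]
    have : x ^ (-γ - 1) ≤ a ^ (-γ - 1) :=
      Real.rpow_le_rpow_of_nonpos ha hx.1 (by linarith)
    have he : -(γ + 1) = -γ - 1 := by ring
    rw [he]
    exact mul_le_mul_of_nonneg_left this hγ.le
  have := Convex.norm_image_sub_le_of_norm_hasDerivWithin_le hderiv hbound
    (convex_Icc a b) (Set.left_mem_Icc.mpr hab) (Set.right_mem_Icc.mpr hab)
  rw [Real.norm_eq_abs] at this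
  calc a ^ (-γ) - b ^ (-γ) ≤ |b ^ (-γ) - a ^ (-γ)| := by
        rw [abs_sub_comm]; exact le_abs_self _
    _ ≤ γ * a ^ (-(γ + 1)) * ‖b - a‖ := this
    _ = γ * a ^ (-(γ + 1)) * (b - a) := by rw [Real.norm_eq_abs, abs_of_nonneg (by linarith)]

set_option maxHeartbeats 1000000

theorem stmt_17 {n p : ℕ} (X : Matrix (Fin n) (Fin p) ℝ) (y : Fin n → ℝ)
    (hcent : ∑ i, y i = 0) (hy : 0 < ∑ i, (y i) ^ 2)
    (ρ : ℝ) (hρ : ρ ^ 2 ≠ 1)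
    (hstd : ∀ k, ∑ i, (X i k) ^ 2 = 1)
    (hcorr : ∀ k l, k ≠ l → ∑ i, X i k * X i l = ρ)
    (Q : Matrix (Fin p) (Fin p) ℝ)
    (hdiag : ∀ k, Q k k = 2 * ((p : ℝ) - 1) / (1 - ρ ^ 2))
    (hoff : ∀ k l, k ≠ l → Q k l = -2 * ρ / (1 - ρ ^ 2))
    (l1 l2 γ : ℝ) (hl1 : 0 < l1) (hl2 : 0 < l2) (hγ : 0 < γ)
    (β0 : Fin p → ℝ) (i j : Fin p) (hij : i ≠ j)
    (h0i : β0 i ≠ 0) (h0j : β0 j ≠ 0)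
    (w : Fin p → ℝ) (hwdef : ∀ k, w k = |β0 k| ^ (-γ))
    (βh : Fin p → ℝ)
    (hmin : ∀ β : Fin p → ℝ,
      (∑ i', (y i' - X.mulVec βh i') ^ 2) + l2 * (∑ a, βh a * Q.mulVec βh a) +
          l1 * ∑ k, w k * |βh k| ≤
        (∑ i', (y i' - X.mulVec β i') ^ 2) + l2 * (∑ a, β a * Q.mulVec β a) +
          l1 * ∑ k, w k * |β k|)
    (hsign : 0 < βh i * βh j) :
    1 / Real.sqrt (∑ i', (y i') ^ 2) * |βh j - βh i| ≤
      (1 - ρ ^ 2) / (2 * ((p : ℝ) + ρ - 1) * l2) *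
        (Real.sqrt (2 * (1 - ρ)) +
          γ * l1 / (Real.sqrt (∑ i', (y i') ^ 2) * (min |β0 i| |β0 j|) ^ (γ + 1)) *
            |β0 i - β0 j|) := by
  set d : ℝ := 2 * ((p : ℝ) - 1) / (1 - ρ ^ 2) with hd
  set o : ℝ := -2 * ρ / (1 - ρ ^ 2) with ho
  -- basic facts
  have hp2 : (2 : ℝ) ≤ (p : ℝ) := by
    have : 2 ≤ p := by
      by_contra hlt
      push_neg at hlt
      interval_cases p
      · exact i.elim0
      · exact hij (Subsingleton.elim i j)
    exact_mod_cast this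
  have hρ2 : ρ ^ 2 < 1 := by
    have hcs := Finset.sum_mul_sq_le_sq_mul_sq Finset.univ (fun i' => X i' i) (fun i' => X i' j)
    rw [hcorr i j hij, hstd i, hstd j] at hcs
    rcases lt_or_eq_of_le (by linarith : ρ ^ 2 ≤ 1) with h | h
    · exact h
    · exact absurd h hρ
  have hρl : -1 < ρ := by nlinarith
  have hρu : ρ < 1 := by nlinarith
  have h1ρ : 0 < 1 - ρ ^ 2 := by nlinarith
  -- structure of Q
  have hQ : ∀ a b, Q a b = o + (if a = b then d - o else 0) := by
    intro a b
    by_cases h : a = b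
    · subst h; simp [hdiag a]
    · simp [h, hoff a b h]
  have hmv : ∀ (β : Fin p → ℝ) a, Q.mulVec β a = o * (∑ b, β b) + (d - o) * β a := by
    intro β a
    simp only [Matrix.mulVec, dotProduct]
    rw [Finset.sum_congr rfl (fun b _ => by rw [hQ a b])]
    simp only [add_mul, ite_mul, zero_mul, Finset.sum_add_distrib, Finset.sum_ite_eq,
      Finset.mem_univ, if_true]
    rw [Finset.mul_sum]
  have hqf : ∀ (β : Fin p → ℝ), ∑ a, β a * Q.mulVec β a
      = o * (∑ a, β a) ^ 2 + (d - o) * ∑ a, (β a) ^ 2 := by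
    intro β
    rw [Finset.sum_congr rfl (fun a _ => by rw [hmv β a])]
    simp only [mul_add, Finset.sum_add_distrib]
    have e1 : ∑ a, β a * (o * (∑ b, β b)) = o * (∑ a, β a) ^ 2 := by
      rw [← Finset.sum_mul]; ring
    have e2 : ∑ a, β a * ((d - o) * β a) = (d - o) * ∑ a, (β a) ^ 2 := by
      rw [Finset.mul_sum]; exact Finset.sum_congr rfl fun a _ => by ring
    rw [e1, e2]
  have hdo : 0 < d - o := by
    rw [hd, ho]
    rw [div_sub_div_same, lt_div_iff₀ h1ρ]
    nlinarith
  -- the KKT-type identity from coordinatewise optimality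
  have keyB : ∀ k : Fin p, βh k ≠ 0 →
      (-2) * (∑ i', X i' k * (y i' - X.mulVec βh i')) +
        2 * l2 * (o * (∑ b, βh b) + (d - o) * βh k) +
        l1 * w k * (if 0 < βh k then 1 else -1) = 0 := by
    intro k hk
    apply quadB_eq_zero (1 + l2 * d) _ |βh k| (abs_pos.mpr hk)
    intro t ht
    set β' : Fin p → ℝ := Function.update βh k (βh k + t) with hβ'def
    have hβ' : ∀ a, β' a = βh a + (if a = k then t else 0) := by
      intro a
      rw [hβ'def, Function.update_apply]
      by_cases h : a = k
      · subst h; simp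
      · simp [h]
    have hmvβ' : ∀ i', X.mulVec β' i' = X.mulVec βh i' + t * X i' k := by
      intro i'
      simp only [Matrix.mulVec, dotProduct]
      rw [Finset.sum_congr rfl (fun a _ => by rw [hβ' a])]
      simp only [mul_add, Finset.sum_add_distrib, mul_ite, mul_zero, Finset.sum_ite_eq',
        Finset.mem_univ, if_true]
      ring
    have hres : ∑ i', (y i' - X.mulVec β' i') ^ 2
        = (∑ i', (y i' - X.mulVec βh i') ^ 2)
          - 2 * t * (∑ i', X i' k * (y i' - X.mulVec βh i')) + t ^ 2 := by
      have e : ∀ i', (y i' - X.mulVec β' i') ^ 2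
          = (y i' - X.mulVec βh i') ^ 2
            - 2 * t * (X i' k * (y i' - X.mulVec βh i')) + t ^ 2 * (X i' k) ^ 2 := by
        intro i'; rw [hmvβ' i']; ring
      rw [Finset.sum_congr rfl (fun i' _ => e i')]
      simp only [Finset.sum_add_distrib, Finset.sum_sub_distrib, ← Finset.mul_sum, hstd k]
      ring
    have hS' : ∑ b, β' b = (∑ b, βh b) + t := by
      rw [Finset.sum_congr rfl (fun a _ => hβ' a)]
      simp [Finset.sum_add_distrib]
    have hSq' : ∑ a, (β' a) ^ 2 = (∑ a, (βh a) ^ 2) + (2 * βh k * t + t ^ 2) := by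
      have e : ∀ a, (β' a) ^ 2 = (βh a) ^ 2 + (if a = k then 2 * βh k * t + t ^ 2 else 0) := by
        intro a
        rw [hβ' a]
        by_cases h : a = k
        · subst h; simp; ring
        · simp [h]
      rw [Finset.sum_congr rfl (fun a _ => e a)]
      simp [Finset.sum_add_distrib]
    have hqd : ∑ a, β' a * Q.mulVec β' a
        = (∑ a, βh a * Q.mulVec βh a)
          + 2 * t * (o * (∑ b, βh b) + (d - o) * βh k) + t ^ 2 * d := by
      rw [hqf, hqf, hS', hSq']
      ring
    have habs : |βh k + t| = |βh k| + (if 0 < βh k then 1 else -1) * t := by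
      have hta := abs_le.mp ht
      rcases hk.lt_or_gt with hneg | hpos
      · rw [if_neg (not_lt.mpr hneg.le)]
        rw [abs_of_neg hneg] at hta ⊢
        rw [abs_of_nonpos (by linarith [hta.2])]
        ring
      · rw [if_pos hpos]
        rw [abs_of_pos hpos] at hta ⊢
        rw [abs_of_nonneg (by linarith [hta.1])]
        ring
    have hl1s : ∑ k', w k' * |β' k'|
        = (∑ k', w k' * |βh k'|) + w k * ((if 0 < βh k then 1 else -1) * t) := by
      have e : ∀ a, w a * |β' a|
          = w a * |βh a| + (if a = k then w k * ((if 0 < βh k then 1 else -1) * t) else 0) := by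
        intro a
        rw [hβ' a]
        by_cases h : a = k
        · subst h
          rw [if_pos rfl, if_pos rfl, habs]
          ring
        · simp [h]
      rw [Finset.sum_congr rfl (fun a _ => e a)]
      simp [Finset.sum_add_distrib]
    have hm := hmin β'
    rw [hres, hqd, hl1s] at hm
    nlinarith [hm]
  -- sign facts
  have hbi : βh i ≠ 0 := fun h => by simp [h] at hsign
  have hbj : βh j ≠ 0 := fun h => by simp [h] at hsign
  have hσ : (if 0 < βh i then (1:ℝ) else -1) = (if 0 < βh j then (1:ℝ) else -1) := by
    by_cases hpi : 0 < βh i <;> by_cases hpj : 0 < βh j <;> simp [hpi, hpj]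
    · push_neg at hpj; nlinarith
    · push_neg at hpi; nlinarith
  -- the master identity
  have hki := keyB i hbi
  have hkj := keyB j hbj
  set σ : ℝ := if 0 < βh j then (1:ℝ) else -1 with hσdef
  rw [hσ] at hki
  have hmaster : 2 * l2 * (d - o) * (βh i - βh j)
      = 2 * ((∑ i', X i' i * (y i' - X.mulVec βh i'))
            - (∑ i', X i' j * (y i' - X.mulVec βh i')))
        - l1 * σ * (w i - w j) := by
    linarith [hki, hkj]
  -- residual norm bound
  have hqfpos : 0 ≤ ∑ a, βh a * Q.mulVec βh a := by
    rw [hqf]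
    have hSb := sq_sum_le_card_mul_sum_sq (s := Finset.univ) (f := βh)
    simp only [Finset.card_univ, Fintype.card_fin] at hSb
    have hsq : (0:ℝ) ≤ ∑ a, (βh a) ^ 2 := Finset.sum_nonneg fun a _ => sq_nonneg _
    rcases le_or_gt 0 ρ with hρ0 | hρ0
    · have hop : o * ((p:ℝ) * ∑ a, (βh a) ^ 2) ≤ o * (∑ a, βh a) ^ 2 := by
        apply mul_le_mul_of_nonpos_left hSb
        rw [ho]; apply div_nonpos_of_nonpos_of_nonneg <;> nlinarith
      have : 0 ≤ (o * (p:ℝ) + (d - o)) * ∑ a, (βh a) ^ 2 := by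
        apply mul_nonneg _ hsq
        rw [ho, hd]
        rw [div_mul_eq_mul_div, div_sub_div_same, ← add_div, le_div_iff₀ h1ρ]
        nlinarith
      nlinarith
    · have hono : 0 ≤ o := by
        rw [ho]; apply div_nonneg _ h1ρ.le; nlinarith
      nlinarith [sq_nonneg (∑ a, βh a)]
  have hwpos : ∀ k, 0 ≤ w k := by
    intro k; rw [hwdef k]; positivity
  have hrle : ∑ i', (y i' - X.mulVec βh i') ^ 2 ≤ ∑ i', (y i') ^ 2 := by
    have hm := hmin 0
    simp only [Matrix.mulVec_zero, Pi.zero_apply, sub_zero, abs_zero, mul_zero,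
      Finset.sum_const_zero, zero_mul, add_zero] at hm
    have hl1nn : 0 ≤ l1 * ∑ k, w k * |βh k| :=
      mul_nonneg hl1.le (Finset.sum_nonneg fun k _ => mul_nonneg (hwpos k) (abs_nonneg _))
    nlinarith [hm]
  -- Cauchy-Schwarz bound
  set ny : ℝ := Real.sqrt (∑ i', (y i') ^ 2) with hnydef
  have hnypos : 0 < ny := Real.sqrt_pos.mpr hy
  have hdiff : (∑ i', X i' i * (y i' - X.mulVec βh i'))
      - (∑ i', X i' j * (y i' - X.mulVec βh i'))
      = ∑ i', (X i' i - X i' j) * (y i' - X.mulVec βh i') := by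
    rw [← Finset.sum_sub_distrib]
    exact Finset.sum_congr rfl fun i' _ => by ring
  have hXd : ∑ i', (X i' i - X i' j) ^ 2 = 2 * (1 - ρ) := by
    have e : ∀ i', (X i' i - X i' j) ^ 2
        = (X i' i) ^ 2 - 2 * (X i' i * X i' j) + (X i' j) ^ 2 := fun i' => by ring
    rw [Finset.sum_congr rfl (fun i' _ => e i')]
    simp only [Finset.sum_add_distrib, Finset.sum_sub_distrib, ← Finset.mul_sum,
      hstd i, hstd j, hcorr i j hij]
    ring
  have hCS : |∑ i', (X i' i - X i' j) * (y i' - X.mulVec βh i')|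
      ≤ Real.sqrt (2 * (1 - ρ)) * ny := by
    have h1 := Finset.sum_mul_sq_le_sq_mul_sq Finset.univ
      (fun i' => X i' i - X i' j) (fun i' => y i' - X.mulVec βh i')
    rw [hXd] at h1
    have h2 : (∑ i', (X i' i - X i' j) * (y i' - X.mulVec βh i')) ^ 2
        ≤ (2 * (1 - ρ)) * ∑ i', (y i') ^ 2 := by
      have := mul_le_mul_of_nonneg_left hrle (by nlinarith : (0:ℝ) ≤ 2 * (1 - ρ))
      linarith
    calc |∑ i', (X i' i - X i' j) * (y i' - X.mulVec βh i')|
        = Real.sqrt ((∑ i', (X i' i - X i' j) * (y i' - X.mulVec βh i')) ^ 2) :=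
          (Real.sqrt_sq_eq_abs _).symm
      _ ≤ Real.sqrt ((2 * (1 - ρ)) * ∑ i', (y i') ^ 2) := Real.sqrt_le_sqrt h2
      _ = Real.sqrt (2 * (1 - ρ)) * ny := Real.sqrt_mul (by nlinarith) _
  -- weight difference bound
  set m : ℝ := min |β0 i| |β0 j| with hmdef
  have hmpos : 0 < m := lt_min (abs_pos.mpr h0i) (abs_pos.mpr h0j)
  have hwbd : |w i - w j| ≤ γ * m ^ (-(γ + 1)) * |β0 i - β0 j| := by
    rw [hwdef i, hwdef j]
    have habsabs : |(|β0 i| - |β0 j|)| ≤ |β0 i - β0 j| := abs_abs_sub_abs_le_abs_sub _ _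
    rcases le_total |β0 i| |β0 j| with hab | hab
    · have hmono : |β0 j| ^ (-γ) ≤ |β0 i| ^ (-γ) :=
        Real.rpow_le_rpow_of_nonpos (abs_pos.mpr h0i) hab (by linarith)
      rw [abs_of_nonneg (by linarith)]
      have hmm : m = |β0 i| := min_eq_left hab
      rw [hmm]
      refine (rpow_neg_sub_le γ |β0 i| |β0 j| hγ (abs_pos.mpr h0i) hab).trans ?_
      have hsub : |β0 j| - |β0 i| ≤ |β0 i - β0 j| := by
        calc |β0 j| - |β0 i| ≤ |(|β0 j| - |β0 i|)| := le_abs_self _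
          _ ≤ |β0 j - β0 i| := abs_abs_sub_abs_le_abs_sub _ _
          _ = |β0 i - β0 j| := abs_sub_comm _ _
      exact mul_le_mul_of_nonneg_left hsub (by positivity)
    · have hmono : |β0 i| ^ (-γ) ≤ |β0 j| ^ (-γ) :=
        Real.rpow_le_rpow_of_nonpos (abs_pos.mpr h0j) hab (by linarith)
      rw [abs_of_nonpos (by linarith), neg_sub]
      have hmm : m = |β0 j| := min_eq_right hab
      rw [hmm]
      refine (rpow_neg_sub_le γ |β0 j| |β0 i| hγ (abs_pos.mpr h0j) hab).trans ?_
      have hsub : |β0 i| - |β0 j| ≤ |β0 i - β0 j| := by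
        calc |β0 i| - |β0 j| ≤ |(|β0 i| - |β0 j|)| := le_abs_self _
          _ ≤ |β0 i - β0 j| := habsabs
      exact mul_le_mul_of_nonneg_left hsub (by positivity)
  -- combine
  have hσabs : |σ| = 1 := by
    rw [hσdef]; by_cases hpj : 0 < βh j <;> simp [hpj]
  have hmain : 2 * l2 * (d - o) * |βh j - βh i|
      ≤ 2 * (Real.sqrt (2 * (1 - ρ)) * ny) + l1 * (γ * m ^ (-(γ + 1)) * |β0 i - β0 j|) := by
    have h1 : |2 * l2 * (d - o) * (βh i - βh j)|
        ≤ 2 * |(∑ i', X i' i * (y i' - X.mulVec βh i'))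
              - (∑ i', X i' j * (y i' - X.mulVec βh i'))| + l1 * (|σ| * |w i - w j|) := by
      rw [hmaster]
      calc |2 * ((∑ i', X i' i * (y i' - X.mulVec βh i'))
            - (∑ i', X i' j * (y i' - X.mulVec βh i'))) - l1 * σ * (w i - w j)|
          ≤ |2 * ((∑ i', X i' i * (y i' - X.mulVec βh i'))
            - (∑ i', X i' j * (y i' - X.mulVec βh i')))| + |l1 * σ * (w i - w j)| :=
            abs_sub _ _
        _ = 2 * |(∑ i', X i' i * (y i' - X.mulVec βh i'))
              - (∑ i', X i' j * (y i' - X.mulVec βh i'))| + l1 * (|σ| * |w i - w j|) := by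
            rw [abs_mul, abs_mul, abs_mul, abs_of_pos hl1, abs_of_pos (by norm_num : (0:ℝ) < 2)]
            ring
    rw [hσabs, one_mul] at h1
    have h2 : |2 * l2 * (d - o) * (βh i - βh j)| = 2 * l2 * (d - o) * |βh j - βh i| := by
      rw [abs_mul, abs_of_pos (by positivity : (0:ℝ) < 2 * l2 * (d - o)), abs_sub_comm]
    rw [h2] at h1
    rw [hdiff] at h1
    have h3 := mul_le_mul_of_nonneg_left hCS (by norm_num : (0:ℝ) ≤ 2)
    have h4 := mul_le_mul_of_nonneg_left hwbd hl1.le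
    linarith
  -- final conversion
  have hdoeq : d - o = 2 * ((p:ℝ) + ρ - 1) / (1 - ρ ^ 2) := by
    rw [hd, ho, div_sub_div_same]; ring_nf
  have hpρ : 0 < (p:ℝ) + ρ - 1 := by linarith
  have hmp : m ^ (-(γ + 1)) = (m ^ (γ + 1))⁻¹ := Real.rpow_neg hmpos.le _
  have hmppos : 0 < m ^ (γ + 1) := Real.rpow_pos_of_pos hmpos _
  set C : ℝ := (1 - ρ ^ 2) / (2 * ((p : ℝ) + ρ - 1) * l2) with hC
  set s2 : ℝ := Real.sqrt (2 * (1 - ρ)) with hs2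
  set D : ℝ := |β0 i - β0 j| with hD
  have hs2nn : 0 ≤ s2 := Real.sqrt_nonneg _
  have hDnn : 0 ≤ D := abs_nonneg _
  have hKC : (2 * l2 * (d - o)) * (C * (s2 * ny + γ * l1 * m ^ (-(γ + 1)) * D))
      = 2 * (s2 * ny) + 2 * (γ * l1 * m ^ (-(γ + 1)) * D) := by
    rw [hdoeq, hC]
    field_simp
  have hgoal' : |βh j - βh i| ≤ C * (s2 * ny + γ * l1 * m ^ (-(γ + 1)) * D) := by
    have hKpos : 0 < 2 * l2 * (d - o) := by positivity
    have hterm : 0 ≤ γ * l1 * m ^ (-(γ + 1)) * D := by positivity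
    have : 2 * l2 * (d - o) * |βh j - βh i|
        ≤ (2 * l2 * (d - o)) * (C * (s2 * ny + γ * l1 * m ^ (-(γ + 1)) * D)) := by
      rw [hKC]; linarith
    exact le_of_mul_le_mul_left this hKpos
  rw [one_div, ← div_eq_inv_mul, div_le_iff₀ hnypos]
  calc |βh j - βh i| ≤ C * (s2 * ny + γ * l1 * m ^ (-(γ + 1)) * D) := hgoal'
    _ = C * (s2 + γ * l1 / (ny * m ^ (γ + 1)) * D) * ny := by
        rw [hmp]
        field_simp
end

section
/- Deterministic form of the sparsity error bound: suppose XᵀX + λ₂Q is invertible with smallest eigenvalue at least bn + λ₂d > 0 and λ_max((1/n)XᵀX) ≤ B. Then for any minimizer β̂ of ‖y − Xβ‖₂² + λ₂βᵀQβ + λ₁‖β‖₁ with y = Xβ* + ε, one has ‖β̂ − β*‖₂ ≤ (‖λ₂Qβ*‖₂ + ‖Xᵀε‖₂ + λ₁√p)/(bn + λ₂d) up to a universal constant 2, i.e. ‖β̂ − β*‖₂² ≤ 4(λ₂²‖Qβ*‖₂² + ‖Xᵀε‖₂² + λ₁²p)/(bn + λ₂d)². -/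
set_option maxHeartbeats 1600000 in
theorem stmt_19 {n p : ℕ} (X : Matrix (Fin n) (Fin p) ℝ)
    (Q : Matrix (Fin p) (Fin p) ℝ) (hQ : Q.PosSemidef)
    (l1 l2 b d B : ℝ) (hl1 : 0 ≤ l1) (hl2 : 0 ≤ l2)
    (hpos : 0 < b * n + l2 * d)
    (heig : ∀ v : Fin p → ℝ,
      (b * n + l2 * d) * ∑ j, (v j) ^ 2 ≤
        ∑ j, v j * ((X.transpose * X + l2 • Q).mulVec v) j)
    (hunit : IsUnit (X.transpose * X + l2 • Q))
    (hBmax : ∀ v : Fin p → ℝ, ∑ i, (X.mulVec v i) ^ 2 ≤ B * n * ∑ j, (v j) ^ 2)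
    (βs : Fin p → ℝ) (ε : Fin n → ℝ) (βh : Fin p → ℝ)
    (hmin : ∀ β : Fin p → ℝ,
      (∑ i, (X.mulVec βs i + ε i - X.mulVec βh i) ^ 2) +
          l2 * (∑ a, βh a * Q.mulVec βh a) + l1 * ∑ k, |βh k| ≤
        (∑ i, (X.mulVec βs i + ε i - X.mulVec β i) ^ 2) +
          l2 * (∑ a, β a * Q.mulVec β a) + l1 * ∑ k, |β k|) :
    ∑ j, (βh j - βs j) ^ 2 ≤
      4 * (l2 ^ 2 * (∑ j, (Q.mulVec βs j) ^ 2) +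
            (∑ j, (X.transpose.mulVec ε j) ^ 2) + l1 ^ 2 * p) /
        (b * n + l2 * d) ^ 2 := by
  classical
  open Matrix in
  have hsym : Q.transpose = Q := by exact (by simpa using hQ.isHermitian : Q.IsSymm).eq
  set K : ℝ := b * n + l2 * d with hKdef
  set v : Fin p → ℝ := fun j => βh j - βs j with hvdef
  -- basic linearity
  have hXv : X.mulVec v = X.mulVec βh - X.mulVec βs := by
    have : v = βh - βs := rfl
    rw [this, Matrix.mulVec_sub]
  have hQv : Q.mulVec v = Q.mulVec βh - Q.mulVec βs := by
    have : v = βh - βs := rfl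
    rw [this, Matrix.mulVec_sub]
  -- scalar abbreviations
  set S : ℝ := ∑ j, (v j) ^ 2 with hSdef
  set SXv : ℝ := ∑ i, (X.mulVec v i) ^ 2 with hSXvdef
  set qhh : ℝ := ∑ a, βh a * Q.mulVec βh a with hqhh
  set qss : ℝ := ∑ a, βs a * Q.mulVec βs a with hqss
  set cr : ℝ := ∑ a, βs a * Q.mulVec βh a with hcr
  set P : ℝ := ∑ j, X.transpose.mulVec ε j * v j with hP
  set W2 : ℝ := ∑ j, (X.transpose.mulVec ε j) ^ 2 with hW2
  set A2 : ℝ := ∑ j, (Q.mulVec βs j) ^ 2 with hA2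
  set R : ℝ := ∑ j, Q.mulVec βs j * v j with hR
  -- cross term identity: ∑ ε i * (X *ᵥ v) i = P
  have hPid : ∑ i, ε i * X.mulVec v i = P := by
    have h1 : ∑ i, ε i * X.mulVec v i = ε ⬝ᵥ X.mulVec v := rfl
    rw [h1, Matrix.dotProduct_mulVec]
    have h2 : ε ᵥ* X = X.transpose.mulVec ε := by
      rw [← Matrix.vecMul_transpose, Matrix.transpose_transpose]
    rw [h2]
    rfl
  -- symmetry of Q
  have hQsym : ∀ u w : Fin p → ℝ, ∑ a, u a * Q.mulVec w a = ∑ a, w a * Q.mulVec u a := by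
    intro u w
    have h1 : ∑ a, u a * Q.mulVec w a = u ⬝ᵥ Q.mulVec w := rfl
    have h2 : ∑ a, w a * Q.mulVec u a = w ⬝ᵥ Q.mulVec u := rfl
    rw [h1, h2, Matrix.dotProduct_mulVec]
    conv_lhs => rw [← hsym, Matrix.vecMul_transpose]
    rw [dotProduct_comm]
  -- quadratic form in v
  have hqvv : ∑ a, v a * Q.mulVec v a = qhh - 2 * cr + qss := by
    rw [hQv]
    have : ∀ a, v a * (Q.mulVec βh - Q.mulVec βs) a
        = βh a * Q.mulVec βh a - βh a * Q.mulVec βs a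
          - βs a * Q.mulVec βh a + βs a * Q.mulVec βs a := by
      intro a; simp only [Pi.sub_apply, hvdef]; ring
    rw [Finset.sum_congr rfl (fun a _ => this a)]
    have hbs : ∑ a, βh a * Q.mulVec βs a = cr := hQsym βh βs
    simp only [Finset.sum_add_distrib, Finset.sum_sub_distrib]
    rw [hbs]; rw [hqhh, hqss, hcr]; ring
  have hRid : R = cr - qss := by
    rw [hR, hcr, hqss]
    have : ∀ j, Q.mulVec βs j * v j = βh j * Q.mulVec βs j - βs j * Q.mulVec βs j := by
      intro j; simp only [hvdef]; ring
    rw [Finset.sum_congr rfl (fun j _ => this j), Finset.sum_sub_distrib, hQsym βh βs]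
  -- eigenvalue bound expansion
  have hEig : K * S ≤ SXv + l2 * (qhh - 2 * cr + qss) := by
    have h := heig v
    have hexp : ∑ j, v j * ((X.transpose * X + l2 • Q).mulVec v) j
        = SXv + l2 * ∑ a, v a * Q.mulVec v a := by
      have h1 : (X.transpose * X + l2 • Q).mulVec v
          = X.transpose.mulVec (X.mulVec v) + l2 • Q.mulVec v := by
        rw [Matrix.add_mulVec, Matrix.smul_mulVec, Matrix.mulVec_mulVec]
      rw [h1]
      have h2 : ∀ j, v j * (X.transpose.mulVec (X.mulVec v) + l2 • Q.mulVec v) j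
          = v j * X.transpose.mulVec (X.mulVec v) j + l2 * (v j * Q.mulVec v j) := by
        intro j; simp only [Pi.add_apply, Pi.smul_apply, smul_eq_mul]; ring
      rw [Finset.sum_congr rfl (fun j _ => h2 j), Finset.sum_add_distrib, ← Finset.mul_sum]
      congr 1
      have h3 : ∑ j, v j * X.transpose.mulVec (X.mulVec v) j
          = v ⬝ᵥ X.transpose.mulVec (X.mulVec v) := rfl
      rw [h3, Matrix.dotProduct_mulVec, Matrix.vecMul_transpose]
      simp only [hSXvdef, dotProduct, sq]
    rw [hexp, hqvv] at h
    exact h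
  -- midpoint inequality
  have hm := hmin (fun j => (βh j + βs j) / 2)
  have hmid : (fun j => (βh j + βs j) / 2) = (2⁻¹ : ℝ) • (βh + βs) := by
    funext j; simp [Pi.smul_apply]; ring
  rw [hmid] at hm
  have hXmid : X.mulVec ((2⁻¹ : ℝ) • (βh + βs))
      = (2⁻¹ : ℝ) • (X.mulVec βh + X.mulVec βs) := by
    rw [Matrix.mulVec_smul, Matrix.mulVec_add]
  have hQmid : Q.mulVec ((2⁻¹ : ℝ) • (βh + βs))
      = (2⁻¹ : ℝ) • (Q.mulVec βh + Q.mulVec βs) := by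
    rw [Matrix.mulVec_smul, Matrix.mulVec_add]
  rw [hXmid, hQmid] at hm
  -- expand the residual sums
  have hE1 : ∑ i, (X.mulVec βs i + ε i - X.mulVec βh i) ^ 2
      = ∑ i, ε i ^ 2 - 2 * P + SXv := by
    have h1 : ∀ i, (X.mulVec βs i + ε i - X.mulVec βh i) ^ 2
        = ε i ^ 2 - 2 * (ε i * X.mulVec v i) + (X.mulVec v i) ^ 2 := by
      intro i
      have : X.mulVec v i = X.mulVec βh i - X.mulVec βs i := by
        rw [hXv]; rfl
      rw [this]; ring
    rw [Finset.sum_congr rfl (fun i _ => h1 i), Finset.sum_add_distrib,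
      Finset.sum_sub_distrib, ← Finset.mul_sum, hPid]
  have hE2 : ∑ i, (X.mulVec βs i + ε i - ((2⁻¹ : ℝ) • (X.mulVec βh + X.mulVec βs)) i) ^ 2
      = ∑ i, ε i ^ 2 - P + SXv / 4 := by
    have h1 : ∀ i, (X.mulVec βs i + ε i - ((2⁻¹ : ℝ) • (X.mulVec βh + X.mulVec βs)) i) ^ 2
        = ε i ^ 2 - (ε i * X.mulVec v i) + (X.mulVec v i) ^ 2 / 4 := by
      intro i
      have hv' : X.mulVec v i = X.mulVec βh i - X.mulVec βs i := by
        rw [hXv]; rfl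
      simp only [Pi.smul_apply, Pi.add_apply, smul_eq_mul]
      rw [hv']; ring
    rw [Finset.sum_congr rfl (fun i _ => h1 i), Finset.sum_add_distrib,
      Finset.sum_sub_distrib, hPid]
    have : ∑ i, (X.mulVec v i) ^ 2 / 4 = SXv / 4 := by
      rw [← Finset.sum_div]
    rw [this]
  -- expand midpoint quadratic Q-form
  have hQ2 : ∑ a, (βh a + βs a) / 2 * (((2⁻¹ : ℝ) • (Q.mulVec βh + Q.mulVec βs)) a)
      = (qhh + 2 * cr + qss) / 4 := by
    have h1 : ∀ a, (βh a + βs a) / 2 * (((2⁻¹ : ℝ) • (Q.mulVec βh + Q.mulVec βs)) a)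
        = (βh a * Q.mulVec βh a + βh a * Q.mulVec βs a
            + βs a * Q.mulVec βh a + βs a * Q.mulVec βs a) / 4 := by
      intro a; simp only [Pi.smul_apply, Pi.add_apply, smul_eq_mul]; ring
    rw [Finset.sum_congr rfl (fun a _ => h1 a), ← Finset.sum_div]
    simp only [Finset.sum_add_distrib]
    rw [hQsym βh βs]
    rw [hqhh, hqss, hcr]; ring
  -- midpoint l1 bound
  have hL1 : ∑ k, |(βh k + βs k) / 2| ≤ ((∑ k, |βh k|) + ∑ k, |βs k|) / 2 := by
    have h1 : ∀ k, |(βh k + βs k) / 2| ≤ (|βh k| + |βs k|) / 2 := by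
      intro k
      rw [abs_div, abs_of_nonneg (by norm_num : (0:ℝ) ≤ 2)]
      have := abs_add_le (βh k) (βs k)
      linarith
    calc ∑ k, |(βh k + βs k) / 2| ≤ ∑ k, (|βh k| + |βs k|) / 2 :=
          Finset.sum_le_sum (fun k _ => h1 k)
      _ = ((∑ k, |βh k|) + ∑ k, |βs k|) / 2 := by
          rw [← Finset.sum_div, Finset.sum_add_distrib]
  rw [hE1] at hm
  rw [hE2] at hm
  rw [hQ2] at hm
  -- key inequality
  set L1h : ℝ := ∑ k, |βh k| with hL1h
  set L1s : ℝ := ∑ k, |βs k| with hL1s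
  have hkey : (3:ℝ)/2 * (SXv + l2 * (qhh - 2*cr + qss))
      ≤ 2 * P - 2 * (l2 * R) + l1 * (L1s - L1h) := by
    have hql : l2 * ((qhh + 2 * cr + qss) / 4)
        = (l2 * qhh + 2 * (l2 * cr) + l2 * qss) / 4 := by ring
    have hqv' : l2 * (qhh - 2*cr + qss) = l2*qhh - 2*(l2*cr) + l2*qss := by ring
    have hRr : l2 * R = l2 * cr - l2 * qss := by rw [hRid]; ring
    have hl1L : l1 * (∑ k, |(βh k + βs k) / 2|) ≤ l1 * ((L1h + L1s)/2) :=
      mul_le_mul_of_nonneg_left hL1 hl1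
    linarith [hm, hl1L, hql, hqv', hRr]
  -- Cauchy–Schwarz bounds
  have hS0 : (0:ℝ) ≤ S := Finset.sum_nonneg (fun j _ => sq_nonneg _)
  set t : ℝ := Real.sqrt S with htdef
  have ht2 : t ^ 2 = S := Real.sq_sqrt hS0
  have ht0 : 0 ≤ t := Real.sqrt_nonneg _
  have hW20 : (0:ℝ) ≤ W2 := Finset.sum_nonneg (fun j _ => sq_nonneg _)
  have hA20 : (0:ℝ) ≤ A2 := Finset.sum_nonneg (fun j _ => sq_nonneg _)
  set aW : ℝ := Real.sqrt W2 with haW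
  set aA : ℝ := Real.sqrt A2 with haA
  have haW2 : aW ^ 2 = W2 := Real.sq_sqrt hW20
  have haA2 : aA ^ 2 = A2 := Real.sq_sqrt hA20
  have haW0 : 0 ≤ aW := Real.sqrt_nonneg _
  have haA0 : 0 ≤ aA := Real.sqrt_nonneg _
  have hCS : ∀ (f : Fin p → ℝ) (F : ℝ), F = Real.sqrt (∑ j, f j ^ 2) →
      ∑ j, f j * v j ≤ F * t := by
    intro f F hF
    have h1 : (∑ j, f j * v j) ^ 2 ≤ (∑ j, f j ^ 2) * S :=
      Finset.sum_mul_sq_le_sq_mul_sq _ _ _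
    calc ∑ j, f j * v j ≤ |∑ j, f j * v j| := le_abs_self _
      _ = Real.sqrt ((∑ j, f j * v j) ^ 2) := (Real.sqrt_sq_eq_abs _).symm
      _ ≤ Real.sqrt ((∑ j, f j ^ 2) * S) := Real.sqrt_le_sqrt h1
      _ = F * t := by
          rw [Real.sqrt_mul (Finset.sum_nonneg (fun j _ => sq_nonneg _)), hF, htdef]
  have hPb : P ≤ aW * t := hCS _ _ haW
  have hRb : -R ≤ aA * t := by
    have := hCS (fun j => -(Q.mulVec βs j)) aA (by
      rw [haA, hA2]; congr 1; exact Finset.sum_congr rfl (fun j _ => by simp))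
    have h2 : ∑ j, -(Q.mulVec βs j) * v j = -R := by
      rw [hR, ← Finset.sum_neg_distrib]; congr 1; funext j; ring
    rw [h2] at this; exact this
  -- l1 part
  have hL1v : L1s - L1h ≤ Real.sqrt p * t := by
    have h1 : L1s - L1h ≤ ∑ k, |v k| := by
      rw [hL1s, hL1h, ← Finset.sum_sub_distrib]
      apply Finset.sum_le_sum
      intro k _
      have h := abs_sub_abs_le_abs_sub (βs k) (βh k)
      have h2 : |βs k - βh k| = |v k| := by rw [abs_sub_comm]
      linarith [h, h2.le, h2.ge]
    have h2 : (∑ k, |v k|) ^ 2 ≤ (p:ℝ) * S := by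
      have := Finset.sum_mul_sq_le_sq_mul_sq Finset.univ (fun k => |v k|) (fun _ => (1:ℝ))
      simp only [mul_one, one_pow] at this
      have hvv : ∑ k, |v k| ^ 2 = S := by
        rw [hSdef]; congr 1; funext k; rw [sq_abs]
      simp only [Finset.sum_const, Finset.card_univ, Fintype.card_fin, nsmul_eq_mul] at this
      rw [hvv] at this
      linarith [this]
    have h3 : ∑ k, |v k| ≤ Real.sqrt ((p:ℝ) * S) := by
      calc ∑ k, |v k| = Real.sqrt ((∑ k, |v k|) ^ 2) := by
            rw [Real.sqrt_sq (Finset.sum_nonneg (fun k _ => abs_nonneg _))]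
        _ ≤ Real.sqrt ((p:ℝ) * S) := Real.sqrt_le_sqrt h2
    rw [Real.sqrt_mul (by positivity)] at h3
    rw [← htdef] at h3
    linarith
  clear_value K v S SXv qhh qss cr P W2 A2 R L1h L1s t aW aA
  clear hsym hXv hQv hPid hQsym hqvv hRid hm hmid hXmid hQmid hE1 hE2 hQ2 hL1 hmin heig hBmax hunit hQ hCS
  -- combine
  have hmain : (3:ℝ)/2 * (K * S) ≤ (2 * aW + 2 * (l2 * aA) + l1 * Real.sqrt p) * t := by
    have h1 : (3:ℝ)/2 * (K * S) ≤ (3:ℝ)/2 * (SXv + l2 * (qhh - 2*cr + qss)) :=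
      mul_le_mul_of_nonneg_left hEig (by norm_num)
    have h2 : 2 * P ≤ 2 * (aW * t) := by linarith
    have h3 : -2 * (l2 * R) ≤ 2 * (l2 * (aA * t)) := by
      have := mul_le_mul_of_nonneg_left hRb hl2
      linarith
    have h4 : l1 * (L1s - L1h) ≤ l1 * (Real.sqrt p * t) :=
      mul_le_mul_of_nonneg_left hL1v hl1
    calc (3:ℝ)/2 * (K * S) ≤ 2 * P - 2 * (l2 * R) + l1 * (L1s - L1h) := by linarith [hkey]
      _ ≤ 2 * (aW * t) + 2 * (l2 * (aA * t)) + l1 * (Real.sqrt p * t) := by linarith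
      _ = (2 * aW + 2 * (l2 * aA) + l1 * Real.sqrt p) * t := by ring
  -- finish
  have hp2 : (Real.sqrt p) ^ 2 = (p:ℝ) := Real.sq_sqrt (by positivity)
  have hgoal : S * K ^ 2 ≤ 4 * (l2 ^ 2 * A2 + W2 + l1 ^ 2 * p) := by
    rcases eq_or_lt_of_le hS0 with hS | hS
    · rw [← hS]
      have hnn : (0:ℝ) ≤ l2 ^ 2 * A2 + W2 + l1 ^ 2 * p :=
        add_nonneg (add_nonneg (mul_nonneg (sq_nonneg l2) hA20) hW20)
          (mul_nonneg (sq_nonneg l1) (Nat.cast_nonneg p))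
      linarith
    · have htpos : 0 < t := htdef ▸ Real.sqrt_pos.mpr hS
      set C : ℝ := 2 * aW + 2 * (l2 * aA) + l1 * Real.sqrt p with hC
      have hKt : (3:ℝ)/2 * K * t ≤ C := by
        refine le_of_mul_le_mul_right ?_ htpos
        have e : (3:ℝ)/2 * K * t * t = (3:ℝ)/2 * (K * S) := by rw [← ht2]; ring
        rw [e]; exact hmain
      have hC2 : C ^ 2 ≤ 9 * (aW ^ 2 + (l2 * aA) ^ 2 + (l1 * Real.sqrt p) ^ 2) := by
        rw [hC]
        have hkeyid : 9 * (aW ^ 2 + (l2 * aA) ^ 2 + (l1 * Real.sqrt p) ^ 2)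
            - (2 * aW + 2 * (l2 * aA) + l1 * Real.sqrt p) ^ 2
            = (aW - 2 * (l1 * Real.sqrt p)) ^ 2
              + (l2 * aA - 2 * (l1 * Real.sqrt p)) ^ 2 + 4 * (aW - l2 * aA) ^ 2 := by
          ring
        linarith [sq_nonneg (aW - 2 * (l1 * Real.sqrt p)),
          sq_nonneg (l2 * aA - 2 * (l1 * Real.sqrt p)), sq_nonneg (aW - l2 * aA), hkeyid]
      have hKsq : ((3:ℝ)/2 * K * t) ^ 2 ≤ C ^ 2 := by
        have hCt : 0 ≤ (3:ℝ)/2 * K * t :=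
          mul_nonneg (mul_nonneg (by norm_num) hpos.le) ht0
        exact pow_le_pow_left₀ hCt hKt 2
      have : (9:ℝ)/4 * K^2 * S ≤ 9 * (W2 + l2^2 * A2 + l1^2 * p) := by
        have e1 : ((3:ℝ)/2 * K * t) ^ 2 = (9:ℝ)/4 * K^2 * t^2 := by ring
        have e2 : (l2 * aA)^2 = l2^2 * A2 := by rw [mul_pow, haA2]
        have e3 : (l1 * Real.sqrt p)^2 = l1^2 * p := by rw [mul_pow, hp2]
        rw [e1, ht2] at hKsq
        rw [e2, e3, haW2] at hC2
        exact le_trans hKsq hC2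
      linarith
  have hK2 : (0:ℝ) < K ^ 2 := pow_pos hpos 2
  rw [le_div_iff₀ hK2]
  exact hgoal
end
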